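/- Conversely, if q* is constant and the energy Γ(x) = (ρ/2)·(q*/A*(x))² + K(x)·φ(A*(x)/A₀(x)) + p_e(x) is constant along a smooth positive function A*(x), with K, A₀, p_e smooth, then (A*, q*) is a stationary solution of the 1D blood flow equations with μ = 0 and g = 0. -/

import Mathlib

/-- Conversely, if q* is constant and the energy
Γ(x) = (ρ/2)(q*/A*)² + K·φ(A*/A₀) + p_e is constant along a smooth positive A*,
then (A*, q*) satisfies the stationary momentum equation with μ = 0 and g = 0. -/
theorem stationary_of_energy_constant (m n ρ qstar : ℝ)
    (hm : 0 < m) (hn1 : -2 < n) (hn2 : n ≤ 0) (hρ : 0 < ρ)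
    (K A₀ pe Astar : ℝ → ℝ)
    (hKpos : ∀ x, 0 < K x) (hA₀pos : ∀ x, 0 < A₀ x) (hApos : ∀ x, 0 < Astar x)
    (hKd : Differentiable ℝ K) (hA₀d : Differentiable ℝ A₀)
    (hped : Differentiable ℝ pe) (hAd : Differentiable ℝ Astar)
    (φ : ℝ → ℝ) (hφ : ∀ a, φ a = a ^ m - a ^ n)
    (hΓ : ∀ x y,
      ρ / 2 * (qstar / Astar x) ^ 2 + K x * φ (Astar x / A₀ x) + pe x
        = ρ / 2 * (qstar / Astar y) ^ 2 + K y * φ (Astar y / A₀ y) + pe y) :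
    ∀ x,
      deriv (fun y => qstar ^ 2 / Astar y) x
        + (Astar x / ρ) * deriv (fun y => K y * φ (Astar y / A₀ y) + pe y) x = 0 := by
  intro x
  have hane : Astar x ≠ 0 := (hApos x).ne'
  have hA := (hAd x).hasDerivAt
  set A' := deriv Astar x with hA'
  have h1 : HasDerivAt (fun y => qstar ^ 2 / Astar y)
      ((0 * Astar x - qstar ^ 2 * A') / (Astar x) ^ 2) x :=
    (hasDerivAt_const x (qstar ^ 2)).div hA hane
  have h2 : HasDerivAt (fun y => ρ / 2 * (qstar / Astar y) ^ 2)
      (ρ / 2 * ((2 : ℕ) * (qstar / Astar x) ^ (2 - 1) *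
        ((0 * Astar x - qstar * A') / (Astar x) ^ 2))) x :=
    (((hasDerivAt_const x qstar).div hA hane).pow 2).const_mul _
  have hgd : DifferentiableAt ℝ (fun y => K y * φ (Astar y / A₀ y) + pe y) x := by
    have hbd : DifferentiableAt ℝ (fun y => Astar y / A₀ y) x :=
      (hAd x).div (hA₀d x) (hA₀pos x).ne'
    have hφd : DifferentiableAt ℝ (fun y => φ (Astar y / A₀ y)) x := by
      have heq : (fun y => φ (Astar y / A₀ y))
          = fun y => (Astar y / A₀ y) ^ m - (Astar y / A₀ y) ^ n := by
        funext y; rw [hφ]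
      rw [heq]
      exact (hbd.rpow_const (Or.inl (div_pos (hApos x) (hA₀pos x)).ne')).sub
        (hbd.rpow_const (Or.inl (div_pos (hApos x) (hA₀pos x)).ne'))
    exact ((hKd x).mul hφd).add (hped x)
  have hconst : (fun y => ρ / 2 * (qstar / Astar y) ^ 2 + (K y * φ (Astar y / A₀ y) + pe y))
      = fun _ => ρ / 2 * (qstar / Astar x) ^ 2 + K x * φ (Astar x / A₀ x) + pe x := by
    funext y
    rw [← add_assoc]
    exact hΓ y x
  have hΓ0 : deriv (fun y => ρ / 2 * (qstar / Astar y) ^ 2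
      + (K y * φ (Astar y / A₀ y) + pe y)) x = 0 := by
    rw [hconst]; exact deriv_const x _
  have hsum : deriv (fun y => ρ / 2 * (qstar / Astar y) ^ 2) x
      + deriv (fun y => K y * φ (Astar y / A₀ y) + pe y) x = 0 := by
    rw [← deriv_add h2.differentiableAt hgd]; exact hΓ0
  have hg : deriv (fun y => K y * φ (Astar y / A₀ y) + pe y) x
      = - (ρ / 2 * ((2 : ℕ) * (qstar / Astar x) ^ (2 - 1) *
          ((0 * Astar x - qstar * A') / (Astar x) ^ 2))) := by
    have h2d := h2.deriv
    linarith [hsum, h2d]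
  rw [h1.deriv, hg]
  have hρne : ρ ≠ 0 := hρ.ne'
  field_simp
  linear_combination (qstar ^ 2 * A' * 2) * mul_inv_cancel₀ hane
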